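/- arXiv:2304.01218 — 7 statements merged into one kernel-verified Lean document; each statement's English description precedes it below -/
import Mathlib

section
/- For any order k ≥ 1, the Bernstein polynomial of a convex continuous function f on [a,b] satisfies f(x) ≤ p_k(x) for all x in [a,b]. -/
open Set

noncomputable def bern (f : ℝ → ℝ) (a b : ℝ) (k : ℕ) (x : ℝ) : ℝ :=
  ∑ i ∈ Finset.range (k + 1),
    f (a + (i / k : ℝ) * (b - a)) * (k.choose i : ℝ) *
      ((x - a) / (b - a)) ^ i * ((b - x) / (b - a)) ^ (k - i)

noncomputable def relu (x : ℝ) : ℝ := max x 0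

lemma bern_weight_sum (k : ℕ) (t : ℝ) :
    ∑ i ∈ Finset.range (k + 1), (k.choose i : ℝ) * t ^ i * (1 - t) ^ (k - i) = 1 := by
  have h : ∑ i ∈ Finset.range (k + 1), (k.choose i : ℝ) * t ^ i * (1 - t) ^ (k - i)
      = (t + (1 - t)) ^ k := by
    rw [add_pow]
    exact Finset.sum_congr rfl fun i _ => by ring
  rw [h]
  norm_num

lemma bern_weight_mean (k : ℕ) (t : ℝ) :
    ∑ i ∈ Finset.range (k + 1), (i : ℝ) * ((k.choose i : ℝ) * t ^ i * (1 - t) ^ (k - i))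
      = k * t := by
  have h := bernsteinPolynomial.sum_smul (R := ℝ) k
  have h2 := congrArg (Polynomial.eval t) h
  simp only [Polynomial.eval_finset_sum, bernsteinPolynomial, nsmul_eq_mul,
    Polynomial.eval_mul, Polynomial.eval_pow, Polynomial.eval_natCast,
    Polynomial.eval_sub, Polynomial.eval_one, Polynomial.eval_X] at h2
  rw [← h2]

theorem bernstein_ge_convex (f : ℝ → ℝ) (a b : ℝ) (k : ℕ)
    (hab : a < b) (hk : 1 ≤ k)
    (hcont : ContinuousOn f (Icc a b))
    (hconv : ConvexOn ℝ (Icc a b) f) :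
    ∀ x ∈ Icc a b, f x ≤ bern f a b k x := by
  intro x hx
  have hba : (0:ℝ) < b - a := by linarith
  have hbane : b - a ≠ 0 := ne_of_gt hba
  have hkpos : (0:ℝ) < k := by exact_mod_cast hk
  set t : ℝ := (x - a) / (b - a) with ht
  have ht0 : 0 ≤ t := div_nonneg (by linarith [hx.1]) (le_of_lt hba)
  have ht1 : t ≤ 1 := by
    rw [ht, div_le_one hba]; linarith [hx.2]
  have hs : (b - x) / (b - a) = 1 - t := by
    field_simp [ht]
    rw [ht, mul_sub, mul_one, mul_div_cancel₀ _ hbane]; ring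
  set w : ℕ → ℝ := fun i => (k.choose i : ℝ) * t ^ i * (1 - t) ^ (k - i) with hw
  set z : ℕ → ℝ := fun i => a + (i / k : ℝ) * (b - a) with hz
  have hw0 : ∀ i ∈ Finset.range (k + 1), 0 ≤ w i := by
    intro i _
    exact mul_nonneg (mul_nonneg (by positivity) (pow_nonneg ht0 _))
      (pow_nonneg (by linarith) _)
  have hw1 : ∑ i ∈ Finset.range (k + 1), w i = 1 := bern_weight_sum k t
  have hzmem : ∀ i ∈ Finset.range (k + 1), z i ∈ Icc a b := by
    intro i hi
    have hik : (i : ℝ) ≤ k := by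
      exact_mod_cast Nat.lt_succ_iff.mp (Finset.mem_range.mp hi)
    have h0 : 0 ≤ (i / k : ℝ) := by positivity
    have h1 : (i / k : ℝ) ≤ 1 := by
      rw [div_le_one hkpos]; exact hik
    constructor
    · simp only [hz]; nlinarith
    · simp only [hz]; nlinarith
  have hmean : ∑ i ∈ Finset.range (k + 1), w i • z i = x := by
    simp only [smul_eq_mul, hz, mul_add]
    rw [Finset.sum_add_distrib]
    have e1 : ∑ i ∈ Finset.range (k + 1), w i * a = a := by
      rw [← Finset.sum_mul, hw1, one_mul]
    have e2 : ∑ i ∈ Finset.range (k + 1), w i * ((i / k : ℝ) * (b - a))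
        = t * (b - a) := by
      have : ∀ i ∈ Finset.range (k + 1), w i * ((i / k : ℝ) * (b - a))
          = ((i : ℝ) * w i) * ((b - a) / k) := by
        intro i _; field_simp
      rw [Finset.sum_congr rfl this, ← Finset.sum_mul, bern_weight_mean k t]
      field_simp
    rw [e1, e2, ht]
    field_simp
    ring
  have key := hconv.map_sum_le hw0 hw1 hzmem
  rw [hmean] at key
  refine key.trans_eq ?_
  unfold bern
  rw [hs]
  apply Finset.sum_congr rfl
  intro i _
  simp only [smul_eq_mul, hw, hz]
  ring
end

section
/- For a convex continuous function f on [a,b], the Bernstein polynomials are monotonically decreasing in order: p_{k+1}(x) ≤ p_k(x) for all x in [a,b] and all k ≥ 1. -/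
open Set

lemma degree_elevation (g : ℕ → ℝ) (t s : ℝ) (k : ℕ) (hts : t + s = 1) :
    ∑ i ∈ Finset.range (k + 1), g i * t ^ i * s ^ (k - i)
      = ∑ j ∈ Finset.range (k + 2),
        ((if 1 ≤ j then g (j - 1) else 0) + (if j ≤ k then g j else 0)) * t ^ j * s ^ (k + 1 - j) := by
  have b1 : ∑ j ∈ Finset.range (k + 2), (if 1 ≤ j then g (j - 1) else 0) * t ^ j * s ^ (k + 1 - j)
      = ∑ i ∈ Finset.range (k + 1), g i * t ^ (i + 1) * s ^ (k - i) := by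
    rw [Finset.sum_range_succ']
    have h0 : (if 1 ≤ 0 then g (0 - 1) else 0) * t ^ 0 * s ^ (k + 1 - 0) = 0 := by
      rw [if_neg (by omega)]; ring
    rw [h0, add_zero]
    refine Finset.sum_congr rfl fun i hi => ?_
    rw [if_pos (by omega), show k + 1 - (i + 1) = k - i from by omega,
      show i + 1 - 1 = i from by omega]
  have b2 : ∑ j ∈ Finset.range (k + 2), (if j ≤ k then g j else 0) * t ^ j * s ^ (k + 1 - j)
      = ∑ i ∈ Finset.range (k + 1), g i * t ^ i * s ^ ((k - i) + 1) := by
    rw [Finset.sum_range_succ]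
    rw [if_neg (by omega), zero_mul, zero_mul, add_zero]
    refine Finset.sum_congr rfl fun i hi => ?_
    rw [Finset.mem_range] at hi
    rw [if_pos (by omega), show k + 1 - i = (k - i) + 1 from by omega]
  have rhs_eq : ∑ j ∈ Finset.range (k + 2),
        ((if 1 ≤ j then g (j - 1) else 0) + (if j ≤ k then g j else 0)) * t ^ j * s ^ (k + 1 - j)
      = (∑ j ∈ Finset.range (k + 2), (if 1 ≤ j then g (j - 1) else 0) * t ^ j * s ^ (k + 1 - j))
        + ∑ j ∈ Finset.range (k + 2), (if j ≤ k then g j else 0) * t ^ j * s ^ (k + 1 - j) := by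
    rw [← Finset.sum_add_distrib]
    exact Finset.sum_congr rfl fun j _ => by ring
  rw [rhs_eq, b1, b2, ← Finset.sum_add_distrib]
  refine Finset.sum_congr rfl fun i _ => ?_
  have : g i * t ^ i * s ^ (k - i) = g i * t ^ i * s ^ (k - i) * (t + s) := by
    rw [hts, mul_one]
  rw [this]; ring

set_option maxHeartbeats 1000000 in
theorem bernstein_antitone_in_order (f : ℝ → ℝ) (a b : ℝ) (k : ℕ)
    (hab : a < b) (hk : 1 ≤ k)
    (hcont : ContinuousOn f (Icc a b))
    (hconv : ConvexOn ℝ (Icc a b) f) :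
    ∀ x ∈ Icc a b, bern f a b (k + 1) x ≤ bern f a b k x := by
  intro x hx
  have hba : (0:ℝ) < b - a := sub_pos.2 hab
  set t : ℝ := (x - a) / (b - a) with ht_def
  set s : ℝ := (b - x) / (b - a) with hs_def
  have ht : 0 ≤ t := div_nonneg (sub_nonneg.2 hx.1) hba.le
  have hs : 0 ≤ s := div_nonneg (sub_nonneg.2 hx.2) hba.le
  have hts : t + s = 1 := by
    rw [ht_def, hs_def, ← add_div, div_eq_one_iff_eq hba.ne']
    ring
  have hk0 : (k : ℝ) ≠ 0 := Nat.cast_ne_zero.2 (by omega)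
  have hkpos : (0:ℝ) < k := by positivity
  have hk1 : (k : ℝ) + 1 ≠ 0 := by positivity
  set g : ℕ → ℝ := fun i => f (a + ((i : ℝ) / k) * (b - a)) * (k.choose i : ℝ) with hg
  have hbk : bern f a b k x
      = ∑ j ∈ Finset.range (k + 2),
        ((if 1 ≤ j then g (j - 1) else 0) + (if j ≤ k then g j else 0)) * t ^ j * s ^ (k + 1 - j) :=
    degree_elevation g t s k hts
  rw [hbk, bern]
  apply Finset.sum_le_sum
  intro j hj
  rw [Finset.mem_range] at hj
  have hcoef : f (a + ((j : ℝ) / ((k : ℝ) + 1)) * (b - a)) * ((k+1).choose j : ℝ)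
      ≤ (if 1 ≤ j then g (j - 1) else 0) + (if j ≤ k then g j else 0) := by
    rcases Nat.eq_zero_or_pos j with hj0 | hj1pos
    · subst hj0
      rw [if_neg (by omega), if_pos (Nat.zero_le k), zero_add, hg]
      simp
    · have hj1 : 1 ≤ j := hj1pos
      rcases eq_or_lt_of_le (by omega : j ≤ k + 1) with hjk1 | hjk
      · -- j = k + 1
        subst hjk1
        rw [if_pos (by omega), if_neg (by omega), add_zero, hg]
        simp only [Nat.add_sub_cancel, Nat.choose_self, Nat.cast_one, mul_one]
        rw [show (((k+1 : ℕ) : ℝ)) = (k : ℝ) + 1 by push_cast; ring,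
          div_self hk1, div_self hk0]
      · -- 1 ≤ j ≤ k
        have hjk : j ≤ k := by omega
        rw [if_pos hj1, if_pos hjk, hg]
        set lam : ℝ := (j : ℝ) / ((k : ℝ) + 1) with hlam
        set mu : ℝ := ((k : ℝ) + 1 - j) / ((k : ℝ) + 1) with hmu
        have hjr : (j : ℝ) ≤ k := by exact_mod_cast hjk
        have hjr1 : (1 : ℝ) ≤ j := by exact_mod_cast hj1
        have hlam0 : 0 ≤ lam := by positivity
        have hmu0 : 0 ≤ mu := by
          apply div_nonneg _ (by positivity)
          linarith
        have hlm : lam + mu = 1 := by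
          rw [hlam, hmu, ← add_div, div_eq_one_iff_eq hk1]; ring
        set u : ℝ := a + (((j - 1 : ℕ) : ℝ) / k) * (b - a) with hu
        set w : ℝ := a + ((j : ℝ) / k) * (b - a) with hw
        have hcast : ((j - 1 : ℕ) : ℝ) = (j : ℝ) - 1 := by
          rw [Nat.cast_sub hj1]; simp
        have humem : u ∈ Icc a b := by
          have h1 : (0:ℝ) ≤ ((j - 1 : ℕ) : ℝ) / k :=
            div_nonneg (by rw [hcast]; linarith) hkpos.le
          have h2 : ((j - 1 : ℕ) : ℝ) / k ≤ 1 := by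
            rw [div_le_one hkpos, hcast]; linarith
          constructor
          · rw [hu]; nlinarith
          · rw [hu]; nlinarith
        have hwmem : w ∈ Icc a b := by
          have h1 : (0:ℝ) ≤ (j : ℝ) / k := div_nonneg (by linarith) hkpos.le
          have h2 : (j : ℝ) / k ≤ 1 := by rw [div_le_one hkpos]; linarith
          constructor
          · rw [hw]; nlinarith
          · rw [hw]; nlinarith
        have hcomb : lam • u + mu • w = a + ((j : ℝ) / ((k : ℝ) + 1)) * (b - a) := by
          simp only [smul_eq_mul, hu, hw, hlam, hmu, hcast]
          field_simp
          ring
        have hconvex := hconv.2 humem hwmem hlam0 hmu0 hlm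
        rw [hcomb] at hconvex
        have hC : (0 : ℝ) ≤ ((k+1).choose j : ℝ) := Nat.cast_nonneg _
        have key : f (a + ((j : ℝ) / ((k : ℝ) + 1)) * (b - a)) * ((k+1).choose j : ℝ)
            ≤ (lam * f u + mu * f w) * ((k+1).choose j : ℝ) := by
          apply mul_le_mul_of_nonneg_right _ hC
          simpa using hconvex
        refine key.trans (le_of_eq ?_)
        have hid1 : lam * ((k+1).choose j : ℝ) = (k.choose (j-1) : ℝ) := by
          have hnat : (k + 1) * k.choose (j - 1) = (k+1).choose j * j := by
            have := Nat.add_one_mul_choose_eq k (j - 1)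
            rwa [show j - 1 + 1 = j by omega] at this
          have hnr : ((k : ℝ) + 1) * (k.choose (j - 1) : ℝ) = ((k+1).choose j : ℝ) * j := by
            exact_mod_cast hnat
          rw [hlam, div_mul_eq_mul_div, mul_comm, ← hnr, mul_comm,
            mul_div_assoc, div_self hk1, mul_one]
        have hid2 : mu * ((k+1).choose j : ℝ) = (k.choose j : ℝ) := by
          have hnat : k.choose j * (k + 1) = (k+1).choose j * (k + 1 - j) := Nat.choose_mul_succ_eq k j
          have hnr : (k.choose j : ℝ) * ((k : ℝ) + 1) = ((k+1).choose j : ℝ) * ((k : ℝ) + 1 - j) := by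
            have := congrArg (Nat.cast : ℕ → ℝ) hnat
            push_cast [Nat.cast_sub (show j ≤ k + 1 by omega)] at this
            linarith [this]
          rw [hmu, div_mul_eq_mul_div, mul_comm, ← hnr, mul_comm,
            mul_div_assoc]
          rw [mul_comm, div_mul_cancel₀ _ hk1]
        rw [add_mul, mul_right_comm, mul_right_comm mu, hid1, hid2]
        simp only [hu, hw]
        ring
  calc f (a + ((j : ℝ) / ((k+1 : ℕ) : ℝ)) * (b - a)) * ((k+1).choose j : ℝ) * t ^ j * s ^ (k + 1 - j)
      ≤ ((if 1 ≤ j then g (j - 1) else 0) + (if j ≤ k then g j else 0)) * t ^ j * s ^ (k + 1 - j) := by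
        apply mul_le_mul_of_nonneg_right _ (pow_nonneg hs _)
        apply mul_le_mul_of_nonneg_right _ (pow_nonneg ht _)
        convert hcoef using 3
        case e'_2 => rfl
        push_cast
        ring
    _ = _ := rfl
end

section
/- If p is the order k ≥ 1 Bernstein polynomial of ReLU on [a,b] with a < 0 < b, then p(x) − ReLU(x) ≤ p(0) for all x in [a,b]. -/
open Set

lemma binom_sum (n : ℕ) (s : ℝ) :
    ∑ i ∈ Finset.range (n + 1), (n.choose i : ℝ) * s ^ i * (1 - s) ^ (n - i) = 1 := by
  have h := add_pow s (1 - s) n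
  rw [add_sub_cancel, one_pow] at h
  exact (Finset.sum_congr rfl fun i _ => by ring).trans h.symm

lemma lin_sum (n : ℕ) (s : ℝ) :
    ∑ i ∈ Finset.range (n + 1), (i : ℝ) * (n.choose i : ℝ) * s ^ i * (1 - s) ^ (n - i)
      = n * s := by
  have h := congrArg (Polynomial.eval s) (bernsteinPolynomial.sum_smul ℝ n)
  simp only [Polynomial.eval_finset_sum, bernsteinPolynomial, nsmul_eq_mul,
    Polynomial.eval_mul, Polynomial.eval_natCast, Polynomial.eval_pow,
    Polynomial.eval_sub, Polynomial.eval_one, Polynomial.eval_X] at h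
  rw [← h]
  exact Finset.sum_congr rfl fun i _ => by ring

lemma pow_one_sub_mono (m n : ℕ) {s t : ℝ} (hs : 0 ≤ s) (hst : s ≤ t)
    (hti : ((m : ℝ) + n + 2) * t ≤ (m : ℝ) + 1) :
    s ^ (m + 1) * (1 - s) ^ (n + 1) ≤ t ^ (m + 1) * (1 - t) ^ (n + 1) := by
  have hmono : MonotoneOn (fun s : ℝ => s ^ (m + 1) * (1 - s) ^ (n + 1)) (Icc 0 t) := by
    apply monotoneOn_of_deriv_nonneg (convex_Icc 0 t)
    · exact (Continuous.mul (continuous_pow _) ((continuous_const.sub continuous_id).pow _)).continuousOn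
    · exact (Differentiable.mul (differentiable_pow _)
        ((differentiable_const _ |>.sub differentiable_id).pow _)).differentiableOn
    · intro y hy
      rw [interior_Icc] at hy
      have h0 : HasDerivAt (fun s : ℝ => 1 - s) (-1) y := by
        simpa using (hasDerivAt_id y).const_sub 1
      have hb : HasDerivAt (fun s : ℝ => (1 - s) ^ (n + 1))
          (((n : ℝ) + 1) * (1 - y) ^ n * (-1)) y := by
        simpa [Function.comp_def] using (hasDerivAt_pow (n + 1) (1 - y)).comp y h0
      have ha : HasDerivAt (fun s : ℝ => s ^ (m + 1)) (((m : ℝ) + 1) * y ^ m) y := by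
        simpa using hasDerivAt_pow (m + 1) y
      have hD : deriv (fun s : ℝ => s ^ (m + 1) * (1 - s) ^ (n + 1)) y = _ := (ha.mul hb).deriv
      rw [hD]
      have hy0 : 0 < y := hy.1
      have hyt : y < t := hy.2
      have h1y : 0 ≤ 1 - y := by nlinarith [hti]
      have heq : ((m : ℝ) + 1) * y ^ m * (1 - y) ^ (n + 1)
          + y ^ (m + 1) * (((n : ℝ) + 1) * (1 - y) ^ n * (-1))
          = y ^ m * (1 - y) ^ n * (((m : ℝ) + 1) - ((m : ℝ) + n + 2) * y) := by ring
      rw [heq]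
      have : 0 ≤ ((m : ℝ) + 1) - ((m : ℝ) + n + 2) * y := by nlinarith
      positivity
  have hsm : s ∈ Icc 0 t := ⟨hs, hst⟩
  have htm : t ∈ Icc 0 t := ⟨le_trans hs hst, le_refl t⟩
  exact hmono hsm htm hst

lemma key_mono (k i : ℕ) (hik : i ≤ k) {s t : ℝ} (hs : 0 ≤ s) (hst : s ≤ t) (ht1 : t ≤ 1)
    (hti : (k : ℝ) * t ≤ i) : s ^ i * (1 - s) ^ (k - i) ≤ t ^ i * (1 - t) ^ (k - i) := by
  rcases Nat.eq_zero_or_pos i with rfl | hi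
  · rcases Nat.eq_zero_or_pos k with rfl | hk
    · simp
    · have hk' : (0 : ℝ) < k := by exact_mod_cast hk
      have ht0 : t ≤ 0 := by
        simp only [Nat.cast_zero] at hti
        nlinarith
      have : s = 0 ∧ t = 0 := ⟨le_antisymm (hst.trans ht0) hs, le_antisymm ht0 (hs.trans hst)⟩
      rw [this.1, this.2]
  · rcases eq_or_lt_of_le hik with rfl | hlt
    · simp only [Nat.sub_self, pow_zero, mul_one]
      exact pow_le_pow_left₀ hs hst _
    · obtain ⟨m, rfl⟩ : ∃ m, i = m + 1 := ⟨i - 1, by omega⟩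
      obtain ⟨n, hkn⟩ : ∃ n, k - (m + 1) = n + 1 := ⟨k - (m + 1) - 1, by omega⟩
      rw [hkn]
      apply pow_one_sub_mono m n hs hst
      have hk : (k : ℝ) = (m : ℝ) + n + 2 := by
        have : k = m + n + 2 := by omega
        rw [this]; push_cast; ring
      rw [hk] at hti
      calc ((m : ℝ) + n + 2) * t ≤ ((m + 1 : ℕ) : ℝ) := hti
        _ = (m : ℝ) + 1 := by push_cast; ring
theorem bernstein_relu_diff_le (a b : ℝ) (k : ℕ) (ha : a < 0) (hb : 0 < b) (hk : 1 ≤ k) :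
    ∀ x ∈ Icc a b, bern relu a b k x - relu x ≤ bern relu a b k 0 := by
  have hd : (0:ℝ) < b - a := by linarith
  have hk0 : (0:ℝ) < (k:ℝ) := by exact_mod_cast hk
  have hbx : ∀ y : ℝ, (b - y)/(b-a) = 1 - (y-a)/(b-a) := by
    intro y; field_simp; ring
  have key : ∀ y : ℝ, bern relu a b k y = y +
      ∑ i ∈ Finset.range (k+1), relu (-(a + (i / k : ℝ) * (b - a))) * (k.choose i : ℝ) *
        ((y - a) / (b - a)) ^ i * ((b - y) / (b - a)) ^ (k - i) := by
    intro y
    have hlin : ∑ i ∈ Finset.range (k+1),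
        (a + (i / k : ℝ) * (b - a)) * (k.choose i : ℝ) * ((y - a) / (b - a)) ^ i
          * (1 - (y - a) / (b - a)) ^ (k - i) = y := by
      have expand : ∀ i ∈ Finset.range (k+1),
          (a + (i / k : ℝ) * (b - a)) * (k.choose i : ℝ) * ((y - a) / (b - a)) ^ i
            * (1 - (y - a) / (b - a)) ^ (k - i)
          = a * ((k.choose i : ℝ) * ((y - a) / (b - a)) ^ i * (1 - (y - a) / (b - a)) ^ (k - i))
            + ((b - a) / k) * ((i : ℝ) * (k.choose i : ℝ) * ((y - a) / (b - a)) ^ i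
              * (1 - (y - a) / (b - a)) ^ (k - i)) := by
        intro i _
        field_simp
      rw [Finset.sum_congr rfl expand, Finset.sum_add_distrib, ← Finset.mul_sum, ← Finset.mul_sum,
        binom_sum, lin_sum]
      field_simp
      ring
    unfold bern
    have step : ∀ i ∈ Finset.range (k+1),
        relu (a + (i / k : ℝ) * (b - a)) * (k.choose i : ℝ) * ((y-a)/(b-a)) ^ i
          * ((b-y)/(b-a)) ^ (k - i)
        = (a + (i / k : ℝ) * (b - a)) * (k.choose i : ℝ) * ((y - a) / (b - a)) ^ i
            * (1 - (y - a) / (b - a)) ^ (k - i)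
          + relu (-(a + (i / k : ℝ) * (b - a))) * (k.choose i : ℝ) * ((y-a)/(b-a)) ^ i
            * ((b-y)/(b-a)) ^ (k - i) := by
      intro i _
      rw [hbx y]
      have hrelu : relu (a + (i / k : ℝ) * (b - a))
          = (a + (i / k : ℝ) * (b - a)) + relu (-(a + (i / k : ℝ) * (b - a))) := by
        unfold relu
        rcases le_total (a + (i / k : ℝ) * (b - a)) 0 with h | h
        · rw [max_eq_right h, max_eq_left (by linarith)]; ring
        · rw [max_eq_left h, max_eq_right (by linarith)]; ring
      rw [hrelu]; ring
    rw [Finset.sum_congr rfl step, Finset.sum_add_distrib, hlin]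
  rintro x ⟨hax, hxb⟩
  rcases le_total x 0 with hx0 | hx0
  · have hrx : relu x = 0 := max_eq_right hx0
    rw [hrx, sub_zero]
    unfold bern
    apply Finset.sum_le_sum
    intro i hi
    have hik : i ≤ k := by have := Finset.mem_range.mp hi; omega
    rw [hbx x, hbx 0]
    rcases le_or_gt (a + (i / k : ℝ) * (b - a)) 0 with hxi | hxi
    · have h0 : relu (a + (i / k : ℝ) * (b - a)) = 0 := max_eq_right hxi
      rw [h0]; simp
    · have hs : 0 ≤ (x - a)/(b-a) := div_nonneg (by linarith) hd.le
      have hst : (x - a)/(b-a) ≤ (0 - a)/(b-a) := by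
        gcongr <;> linarith
      have ht1 : (0 - a)/(b-a) ≤ 1 := (div_le_one hd).mpr (by linarith)
      have hti : (k:ℝ) * ((0 - a)/(b-a)) ≤ i := by
        have h2 : (i:ℝ)/k*(b-a)*k = i*(b-a) := by field_simp
        have h3 : (-a)*(k:ℝ) < (i:ℝ)*(b-a) := by
          have := mul_lt_mul_of_pos_right (show (-a) < (i:ℝ)/k*(b-a) by linarith) hk0
          linarith
        rw [← mul_div_assoc, div_le_iff₀ hd]
        nlinarith
      have hm := key_mono k i hik hs hst ht1 hti
      have cnn : 0 ≤ relu (a + (i / k : ℝ) * (b - a)) * (k.choose i : ℝ) :=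
        mul_nonneg (le_max_right _ _) (Nat.cast_nonneg _)
      have := mul_le_mul_of_nonneg_left hm cnn
      linarith [this]
  · have hrx : relu x = x := max_eq_left hx0
    rw [key x, key 0, hrx, add_sub_cancel_left, zero_add]
    apply Finset.sum_le_sum
    intro i hi
    have hik : i ≤ k := by have := Finset.mem_range.mp hi; omega
    rw [hbx x, hbx 0]
    rcases le_or_gt 0 (a + (i / k : ℝ) * (b - a)) with hxi | hxi
    · have h0 : relu (-(a + (i / k : ℝ) * (b - a))) = 0 := max_eq_right (by linarith)
      rw [h0]; simp
    · have hs1 : (x - a)/(b-a) ≤ 1 := (div_le_one hd).mpr (by linarith)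
      have hs0 : 0 ≤ 1 - (x-a)/(b-a) := by linarith
      have hst : 1 - (x-a)/(b-a) ≤ 1 - (0-a)/(b-a) := by
        have : (0-a)/(b-a) ≤ (x-a)/(b-a) := by
          gcongr <;> linarith
        linarith
      have ht1' : 1 - (0-a)/(b-a) ≤ 1 := by
        have : 0 ≤ (0-a)/(b-a) := div_nonneg (by linarith) hd.le
        linarith
      have hti : (k:ℝ) * (1 - (0-a)/(b-a)) ≤ ((k - i : ℕ) : ℝ) := by
        rw [Nat.cast_sub hik]
        have h2 : (i:ℝ)/k*(b-a)*k = i*(b-a) := by field_simp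
        have h3 : (i:ℝ)*(b-a) < (-a)*(k:ℝ) := by
          have := mul_lt_mul_of_pos_right (show (i:ℝ)/k*(b-a) < -a by linarith) hk0
          linarith
        have h4 : (i:ℝ) ≤ (k:ℝ) * ((0-a)/(b-a)) := by
          rw [← mul_div_assoc, le_div_iff₀ hd]
          nlinarith
        nlinarith
      have hm := key_mono k (k - i) (Nat.sub_le _ _) hs0 hst ht1' hti
      rw [Nat.sub_sub_self hik] at hm
      have e1 : (1:ℝ) - (1 - (x-a)/(b-a)) = (x-a)/(b-a) := by ring
      have e2 : (1:ℝ) - (1 - (0-a)/(b-a)) = (0-a)/(b-a) := by ring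
      rw [e1, e2] at hm
      have cnn : 0 ≤ relu (-(a + (i / k : ℝ) * (b - a))) * (k.choose i : ℝ) :=
        mul_nonneg (le_max_right _ _) (Nat.cast_nonneg _)
      have := mul_le_mul_of_nonneg_left hm cnn
      linarith [this]
end

section
/- The Bernstein polynomial of a convex function on [a,b] is itself convex on [a,b]. -/
open Set

/-- Bernstein-type sum on [0,1] with coefficients `c`. -/
noncomputable def bS (k : ℕ) (c : ℕ → ℝ) (x : ℝ) : ℝ :=
  ∑ i ∈ Finset.range (k + 1), c i * (k.choose i : ℝ) * x ^ i * (1 - x) ^ (k - i)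

lemma bS_zero (d : ℕ → ℝ) : bS 0 d = fun _ => d 0 := by
  funext x; simp [bS]

lemma bS_key_sum (k : ℕ) (c : ℕ → ℝ) (x : ℝ) :
    ∑ i ∈ Finset.range (k + 2),
      c i * ((k+1).choose i : ℝ) *
        ((i : ℝ) * x ^ (i - 1) * (1 - x) ^ (k + 1 - i)
          - ((k + 1 - i : ℕ) : ℝ) * x ^ i * (1 - x) ^ (k - i))
    = (k + 1 : ℝ) * bS k (fun i => c (i + 1) - c i) x := by
  have hsplit : ∑ i ∈ Finset.range (k + 2),
      c i * ((k+1).choose i : ℝ) *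
        ((i : ℝ) * x ^ (i - 1) * (1 - x) ^ (k + 1 - i)
          - ((k + 1 - i : ℕ) : ℝ) * x ^ i * (1 - x) ^ (k - i))
      = (∑ i ∈ Finset.range (k + 2),
          c i * ((k+1).choose i : ℝ) * (i : ℝ) * x ^ (i - 1) * (1 - x) ^ (k + 1 - i))
        - ∑ i ∈ Finset.range (k + 2),
          c i * ((k+1).choose i : ℝ) * ((k + 1 - i : ℕ) : ℝ) * x ^ i * (1 - x) ^ (k - i) := by
    rw [← Finset.sum_sub_distrib]
    exact Finset.sum_congr rfl fun i _ => by ring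
  have hA : (∑ i ∈ Finset.range (k + 2),
          c i * ((k+1).choose i : ℝ) * (i : ℝ) * x ^ (i - 1) * (1 - x) ^ (k + 1 - i))
      = ∑ j ∈ Finset.range (k + 1),
          c (j+1) * ((k+1).choose (j+1) : ℝ) * ((j+1 : ℕ) : ℝ) * x ^ j * (1 - x) ^ (k - j) := by
    rw [Finset.sum_range_succ']
    have h0 : c 0 * ((k+1).choose 0 : ℝ) * ((0:ℕ) : ℝ) * x ^ (0 - 1) * (1 - x) ^ (k + 1 - 0) = 0 := by
      norm_num
    rw [h0, add_zero]
    refine Finset.sum_congr rfl fun j hj => ?_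
    rw [show j + 1 - 1 = j from rfl, show k + 1 - (j + 1) = k - j from by omega]
  have hB : (∑ i ∈ Finset.range (k + 2),
          c i * ((k+1).choose i : ℝ) * ((k + 1 - i : ℕ) : ℝ) * x ^ i * (1 - x) ^ (k - i))
      = ∑ i ∈ Finset.range (k + 1),
          c i * ((k+1).choose i : ℝ) * ((k + 1 - i : ℕ) : ℝ) * x ^ i * (1 - x) ^ (k - i) := by
    rw [Finset.sum_range_succ]
    have h0 : c (k+1) * ((k+1).choose (k+1) : ℝ) * ((k + 1 - (k+1) : ℕ) : ℝ) * x ^ (k+1) *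
        (1 - x) ^ (k - (k+1)) = 0 := by
      simp
    rw [h0, add_zero]
  rw [hsplit, hA, hB, ← Finset.sum_sub_distrib, bS, Finset.mul_sum]
  refine Finset.sum_congr rfl fun j hj => ?_
  have hjk : j ≤ k := Nat.lt_succ_iff.mp (Finset.mem_range.mp hj)
  have e1 : (((k+1).choose (j+1) : ℝ)) * (((j+1 : ℕ)) : ℝ) = (k + 1 : ℝ) * (k.choose j : ℝ) := by
    exact_mod_cast (Nat.add_one_mul_choose_eq k j).symm
  have e2 : (((k+1).choose j : ℝ)) * ((k + 1 - j : ℕ) : ℝ) = (k.choose j : ℝ) * (k + 1 : ℝ) := by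
    exact_mod_cast (Nat.choose_mul_succ_eq k j).symm
  linear_combination (c (j+1) * x ^ j * (1-x) ^ (k - j)) * e1
    - (c j * x ^ j * (1-x) ^ (k - j)) * e2

lemma bS_hasDerivAt (k : ℕ) (c : ℕ → ℝ) (x : ℝ) :
    HasDerivAt (bS (k + 1) c) ((k + 1 : ℝ) * bS k (fun i => c (i + 1) - c i) x) x := by
  have h : ∀ i ∈ Finset.range (k + 2), HasDerivAt
      (fun y : ℝ => c i * ((k+1).choose i : ℝ) * y ^ i * (1 - y) ^ (k + 1 - i))
      (c i * ((k+1).choose i : ℝ) *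
        ((i : ℝ) * x ^ (i - 1) * (1 - x) ^ (k + 1 - i)
          - ((k + 1 - i : ℕ) : ℝ) * x ^ i * (1 - x) ^ (k - i))) x := by
    intro i _
    have h1 : HasDerivAt (fun y : ℝ => y ^ i) ((i : ℝ) * x ^ (i - 1)) x := hasDerivAt_pow i x
    have h2 : HasDerivAt (fun y : ℝ => (1 - y) ^ (k + 1 - i))
        (-(((k + 1 - i : ℕ) : ℝ) * (1 - x) ^ (k - i))) x := by
      have hsub : HasDerivAt (fun y : ℝ => 1 - y) (0 - 1) x :=
        (hasDerivAt_const x (1:ℝ)).sub (hasDerivAt_id x)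
      have := (hasDerivAt_pow (k + 1 - i) (1 - x)).comp x hsub
      refine this.congr_deriv ?_
      rw [show k + 1 - i - 1 = k - i from by omega]
      ring
    have := ((h1.const_mul (c i * ((k+1).choose i : ℝ))).mul h2)
    refine this.congr_deriv ?_
    ring
  have hs := HasDerivAt.fun_sum h
  have heq : bS (k + 1) c = fun y => ∑ i ∈ Finset.range (k + 2),
      c i * ((k+1).choose i : ℝ) * y ^ i * (1 - y) ^ (k + 1 - i) := rfl
  rw [heq, ← bS_key_sum k c x]
  exact hs

lemma bS_differentiable (k : ℕ) (c : ℕ → ℝ) : Differentiable ℝ (bS (k + 1) c) :=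
  fun x => (bS_hasDerivAt k c x).differentiableAt

lemma bS_deriv (k : ℕ) (c : ℕ → ℝ) :
    deriv (bS (k + 1) c) = fun x => (k + 1 : ℝ) * bS k (fun i => c (i + 1) - c i) x :=
  funext fun x => (bS_hasDerivAt k c x).deriv

lemma bS_nonneg (k : ℕ) (d : ℕ → ℝ) (x : ℝ) (hx : x ∈ Icc (0:ℝ) 1)
    (hd : ∀ i, i ≤ k → 0 ≤ d i) : 0 ≤ bS k d x := by
  refine Finset.sum_nonneg fun i hi => ?_
  have hik : i ≤ k := Nat.lt_succ_iff.mp (Finset.mem_range.mp hi)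
  have h1 : (0:ℝ) ≤ x ^ i := pow_nonneg hx.1 i
  have h2 : (0:ℝ) ≤ (1 - x) ^ (k - i) := pow_nonneg (by linarith [hx.2]) _
  have h3 : (0:ℝ) ≤ (k.choose i : ℝ) := Nat.cast_nonneg _
  have h4 := hd i hik
  have := mul_nonneg (mul_nonneg (mul_nonneg h4 h3) h1) h2
  linarith

lemma bS_convexOn (k : ℕ) (c : ℕ → ℝ)
    (hc : ∀ i, i + 2 ≤ k → 0 ≤ c (i + 2) - 2 * c (i + 1) + c i) :
    ConvexOn ℝ (Icc (0:ℝ) 1) (bS k c) := by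
  cases k with
  | zero =>
    rw [bS_zero]
    exact convexOn_const _ (convex_Icc 0 1)
  | succ m =>
    have hdiff : Differentiable ℝ (bS (m + 1) c) := bS_differentiable m c
    have hdiff2 : Differentiable ℝ (deriv (bS (m + 1) c)) := by
      rw [bS_deriv m c]
      cases m with
      | zero =>
        simp only [bS_zero]
        exact differentiable_const _
      | succ l =>
        exact (bS_differentiable l _).const_mul _
    refine convexOn_of_deriv2_nonneg (convex_Icc 0 1) hdiff.continuous.continuousOn
      hdiff.differentiableOn hdiff2.differentiableOn fun x hx => ?_
    have hx' : x ∈ Icc (0:ℝ) 1 := interior_subset hx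
    show 0 ≤ deriv (deriv (bS (m + 1) c)) x
    rw [bS_deriv m c]
    cases m with
    | zero =>
      simp only [bS_zero]
      simp
    | succ l =>
      have hd := (bS_hasDerivAt l (fun i => c (i + 1) - c i) x).const_mul
        (((l + 1 : ℕ) : ℝ) + 1)
      rw [hd.deriv]
      have hb : 0 ≤ bS l (fun i => (c (i + 1 + 1) - c (i + 1)) - (c (i + 1) - c i)) x := by
        refine bS_nonneg l _ x hx' fun i hi => ?_
        have := hc i (by omega)
        have h2 : c (i + 1 + 1) = c (i + 2) := by norm_num
        rw [h2]; linarith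
      have hl1 : (0:ℝ) ≤ ((l + 1 : ℕ) : ℝ) + 1 := by positivity
      have hl2 : (0:ℝ) ≤ ((l : ℕ) : ℝ) + 1 := by positivity
      have := mul_nonneg hl1 (mul_nonneg hl2 hb)
      exact this

theorem bernstein_convexOn (f : ℝ → ℝ) (a b : ℝ) (k : ℕ)
    (hab : a < b) (hk : 1 ≤ k)
    (hcont : ContinuousOn f (Icc a b))
    (hconv : ConvexOn ℝ (Icc a b) f) :
    ConvexOn ℝ (Icc a b) (bern f a b k) := by
  have hba : (0:ℝ) < b - a := by linarith
  have hba' : b - a ≠ 0 := ne_of_gt hba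
  have hkpos : (0:ℝ) < (k:ℝ) := by exact_mod_cast hk
  set c : ℕ → ℝ := fun i => f (a + (i / k : ℝ) * (b - a)) with hc_def
  have hnode : ∀ i : ℕ, i ≤ k → a + (i / k : ℝ) * (b - a) ∈ Icc a b := by
    intro i hi
    constructor
    · have : (0:ℝ) ≤ (i / k : ℝ) * (b - a) := by positivity
      linarith
    · have h1 : (i : ℝ) / k ≤ 1 := by
        rw [div_le_one hkpos]; exact_mod_cast hi
      nlinarith
  have hc : ∀ i, i + 2 ≤ k → 0 ≤ c (i + 2) - 2 * c (i + 1) + c i := by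
    intro i hi
    have hu := hnode i (by omega)
    have hv := hnode (i + 2) hi
    have key := hconv.2 hu hv (by norm_num : (0:ℝ) ≤ 1/2) (by norm_num : (0:ℝ) ≤ 1/2)
      (by norm_num : (1/2 : ℝ) + 1/2 = 1)
    have hmid : (1/2 : ℝ) • (a + ((i : ℕ) / k : ℝ) * (b - a))
          + (1/2 : ℝ) • (a + (((i + 2 : ℕ)) / k : ℝ) * (b - a))
        = a + (((i + 1 : ℕ) : ℝ) / k) * (b - a) := by
      simp only [smul_eq_mul]
      push_cast
      field_simp
      ring
    rw [hmid] at key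
    simp only [smul_eq_mul] at key
    simp only [hc_def]
    push_cast at key ⊢
    linarith
  have hS := bS_convexOn k c hc
  have hbern : ∀ x : ℝ, bern f a b k x = bS k c ((x - a) / (b - a)) := by
    intro x
    refine Finset.sum_congr rfl fun i _ => ?_
    have h1 : 1 - (x - a) / (b - a) = (b - x) / (b - a) := by
      field_simp
      ring
    rw [h1]
  constructor
  · exact convex_Icc a b
  · intro x hx y hy s t hs ht hst
    have hφ : ∀ z ∈ Icc a b, (z - a) / (b - a) ∈ Icc (0:ℝ) 1 := by
      intro z hz
      constructor
      · apply div_nonneg _ (le_of_lt hba); linarith [hz.1]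
      · rw [div_le_one hba]; linarith [hz.2]
    have haff : ((s • x + t • y) - a) / (b - a)
        = s • ((x - a) / (b - a)) + t • ((y - a) / (b - a)) := by
      simp only [smul_eq_mul]
      rw [← mul_div_assoc, ← mul_div_assoc, ← add_div]
      congr 1
      linear_combination a * hst
    have key := hS.2 (hφ x hx) (hφ y hy) hs ht hst
    simp only [smul_eq_mul] at key haff ⊢
    rw [hbern, hbern, hbern, haff]
    exact key
end

section
/- For the order k ≥ 1 Bernstein polynomial p of ReLU on [a,b] with a < 0 < b, the function x ↦ p(x) − ReLU(x) is monotonically non-decreasing on [a,0] and monotonically non-increasing on [0,b], so its maximum over [a,b] is p(0). -/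
open Set
open Finset

lemma bern_sum_hasDerivAt (c : ℕ → ℝ) (k : ℕ) (t : ℝ) :
    HasDerivAt (fun s : ℝ => ∑ i ∈ range (k+1), c i * (k.choose i : ℝ) * s ^ i * (1-s) ^ (k-i))
      (∑ i ∈ range (k+1), c i * (k.choose i : ℝ) *
        ((i : ℝ) * t ^ (i-1) * (1-t) ^ (k-i) - t ^ i * ((k-i : ℕ) : ℝ) * (1-t) ^ (k-i-1))) t := by
  apply HasDerivAt.fun_sum
  intro i _
  have h1 : HasDerivAt (fun s : ℝ => s ^ i) ((i:ℝ) * t ^ (i-1)) t := hasDerivAt_pow i t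
  have h2 : HasDerivAt (fun s : ℝ => (1-s) ^ (k-i)) (-(((k-i:ℕ):ℝ) * (1-t) ^ (k-i-1))) t := by
    have hs : HasDerivAt (fun s : ℝ => 1 - s) (-1) t := by
      simpa using (hasDerivAt_const t (1:ℝ)).fun_sub (hasDerivAt_id t)
    have := (hasDerivAt_pow (k-i) (1-t)).comp t hs
    simpa [Function.comp_def, mul_comm, mul_assoc] using this
  have h3 := (h1.fun_mul h2).const_mul (c i * (k.choose i : ℝ))
  have hfun : (fun s : ℝ => c i * (k.choose i : ℝ) * s ^ i * (1-s) ^ (k-i))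
      = (fun s : ℝ => c i * (k.choose i : ℝ) * (s ^ i * (1-s) ^ (k-i))) := by
    funext s; ring
  rw [hfun]
  refine h3.congr_deriv ?_
  ring

lemma deriv_sum_eq (c : ℕ → ℝ) (m : ℕ) (t : ℝ) :
    (∑ i ∈ range (m+1+1), c i * ((m+1).choose i : ℝ) *
        ((i : ℝ) * t ^ (i-1) * (1-t) ^ (m+1-i) - t ^ i * ((m+1-i : ℕ) : ℝ) * (1-t) ^ (m+1-i-1)))
    = (m+1 : ℝ) * ∑ j ∈ range (m+1), (c (j+1) - c j) * (m.choose j : ℝ) * t ^ j * (1-t) ^ (m-j) := by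
  simp only [mul_sub]
  rw [Finset.sum_sub_distrib]
  have e1 : ∑ i ∈ range (m+1+1), c i * ((m+1).choose i : ℝ) * ((i : ℝ) * t ^ (i-1) * (1-t) ^ (m+1-i))
      = ∑ j ∈ range (m+1), (m+1 : ℝ) * (c (j+1) * (m.choose j : ℝ) * t ^ j * (1-t) ^ (m-j)) := by
    rw [Finset.sum_range_succ']
    simp only [Nat.cast_zero, zero_mul, mul_zero, add_zero, Nat.add_sub_cancel]
    apply Finset.sum_congr rfl
    intro j hj
    have hc : ((m+1).choose (j+1) : ℝ) * ((j:ℝ)+1) = ((m:ℝ)+1) * ((m.choose j : ℕ) : ℝ) := by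
      exact_mod_cast congrArg (Nat.cast : ℕ → ℝ) (Nat.add_one_mul_choose_eq m j).symm
    have hsub : m + 1 - (j+1) = m - j := by omega
    rw [hsub]
    push_cast
    linear_combination (c (j+1) * t ^ j * (1-t) ^ (m-j)) * hc
  have e2 : ∑ i ∈ range (m+1+1), c i * ((m+1).choose i : ℝ) * (t ^ i * ((m+1-i : ℕ) : ℝ) * (1-t) ^ (m+1-i-1))
      = ∑ j ∈ range (m+1), (m+1 : ℝ) * (c j * (m.choose j : ℝ) * t ^ j * (1-t) ^ (m-j)) := by
    rw [Finset.sum_range_succ]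
    simp only [Nat.sub_self, Nat.cast_zero, mul_zero, zero_mul, add_zero]
    apply Finset.sum_congr rfl
    intro j hj
    have hjm : j < m + 1 := Finset.mem_range.mp hj
    have hc : ((m+1).choose j : ℝ) * ((m+1-j : ℕ) : ℝ) = ((m:ℝ)+1) * ((m.choose j : ℕ) : ℝ) := by
      have h2 : ((m+1).choose j * (m+1-j) : ℕ) = (m+1) * m.choose j := by
        rw [← Nat.choose_mul_succ_eq m j]; ring
      exact_mod_cast congrArg (Nat.cast : ℕ → ℝ) h2
    have hsub : m + 1 - j - 1 = m - j := by omega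
    rw [hsub]
    linear_combination (c j * t ^ j * (1-t) ^ (m-j)) * hc
  rw [e1, e2, ← Finset.sum_sub_distrib, Finset.mul_sum]
  apply Finset.sum_congr rfl
  intro j hj
  ring

theorem bernstein_relu_diff_monotone (a b : ℝ) (k : ℕ)
    (ha : a < 0) (hb : 0 < b) (hk : 1 ≤ k) :
    MonotoneOn (fun x => bern relu a b k x - relu x) (Icc a 0) ∧
    AntitoneOn (fun x => bern relu a b k x - relu x) (Icc 0 b) ∧
    ∀ x ∈ Icc a b, bern relu a b k x - relu x ≤ bern relu a b k 0 := by
  obtain ⟨m, rfl⟩ : ∃ m, k = m + 1 := ⟨k - 1, by omega⟩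
  have hba : (0:ℝ) < b - a := by linarith
  have hba' : (b - a : ℝ) ≠ 0 := ne_of_gt hba
  set c : ℕ → ℝ := fun i => relu (a + ((i : ℝ) / ((m:ℝ)+1)) * (b - a)) with hc_def
  -- difference bounds
  have hrelu_mono : ∀ x y : ℝ, x ≤ y → relu x ≤ relu y := fun x y h =>
    max_le_max h le_rfl
  have hrelu_lip : ∀ x y : ℝ, x ≤ y → relu y - relu x ≤ y - x := by
    intro x y h
    have h1 : max y 0 ≤ (y - x) + max x 0 :=
      max_le (by linarith [le_max_left x 0]) (add_nonneg (by linarith) (le_max_right x 0))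
    simp only [relu]; linarith
  have harg : ∀ j : ℕ, (a + (((j:ℝ)+1) / ((m:ℝ)+1)) * (b - a)) - (a + ((j : ℝ) / ((m:ℝ)+1)) * (b - a))
      = (b - a) / ((m:ℝ)+1) := by
    intro j
    have hm1 : ((m:ℝ)+1) ≠ 0 := by positivity
    field_simp
    ring
  have hd0 : ∀ j : ℕ, 0 ≤ c (j+1) - c j := by
    intro j
    have := hrelu_mono (a + ((j : ℝ) / ((m:ℝ)+1)) * (b - a)) (a + (((j:ℝ)+1) / ((m:ℝ)+1)) * (b - a))
      (by nlinarith [harg j, div_pos hba (by positivity : (0:ℝ) < (m:ℝ)+1)])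
    simp only [hc_def]
    push_cast
    linarith [this]
  have hd1 : ∀ j : ℕ, c (j+1) - c j ≤ (b - a) / ((m:ℝ)+1) := by
    intro j
    have hle : (a + ((j : ℝ) / ((m:ℝ)+1)) * (b - a)) ≤ (a + (((j:ℝ)+1) / ((m:ℝ)+1)) * (b - a)) := by
      nlinarith [harg j, div_pos hba (by positivity : (0:ℝ) < (m:ℝ)+1)]
    have := hrelu_lip _ _ hle
    rw [harg j] at this
    simp only [hc_def]
    push_cast
    linarith [this]
  -- the derivative
  have hderiv : ∀ x : ℝ, HasDerivAt (bern relu a b (m+1))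
      ((((m:ℝ)+1) * ∑ j ∈ range (m+1), (c (j+1) - c j) * (m.choose j : ℝ) *
        ((x-a)/(b-a)) ^ j * (1-(x-a)/(b-a)) ^ (m-j)) * (b-a)⁻¹) x := by
    intro x
    have hu : HasDerivAt (fun x : ℝ => (x - a) / (b - a)) ((b-a)⁻¹) x := by
      simpa [div_eq_mul_inv] using ((hasDerivAt_id x).sub_const a).div_const (b - a)
    have hg := (bern_sum_hasDerivAt c (m+1) ((x-a)/(b-a))).comp x hu
    rw [deriv_sum_eq c m ((x-a)/(b-a))] at hg
    have hfun : ((fun s : ℝ => ∑ i ∈ range (m+1+1), c i * ((m+1).choose i : ℝ) * s ^ i * (1-s) ^ (m+1-i))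
        ∘ (fun x : ℝ => (x - a) / (b - a))) = bern relu a b (m+1) := by
      funext y
      simp only [Function.comp, bern, hc_def]
      apply Finset.sum_congr rfl
      intro i _
      have h1 : 1 - (y - a) / (b - a) = (b - y) / (b - a) := by field_simp; ring
      rw [h1]
      push_cast
      ring
    rwa [hfun] at hg
  -- bounds on the derivative for x ∈ Icc a b
  have hDbound : ∀ x ∈ Icc a b,
      0 ≤ (((m:ℝ)+1) * ∑ j ∈ range (m+1), (c (j+1) - c j) * (m.choose j : ℝ) *
        ((x-a)/(b-a)) ^ j * (1-(x-a)/(b-a)) ^ (m-j)) ∧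
      (((m:ℝ)+1) * ∑ j ∈ range (m+1), (c (j+1) - c j) * (m.choose j : ℝ) *
        ((x-a)/(b-a)) ^ j * (1-(x-a)/(b-a)) ^ (m-j)) ≤ b - a := by
    intro x hx
    set s : ℝ := (x-a)/(b-a) with hs_def
    have hs0 : 0 ≤ s := div_nonneg (by linarith [hx.1]) (le_of_lt hba)
    have hs1 : s ≤ 1 := by
      rw [hs_def, div_le_one hba]; linarith [hx.2]
    have hs1' : 0 ≤ 1 - s := by linarith
    have hterm_nonneg : ∀ j ∈ range (m+1),
        0 ≤ (c (j+1) - c j) * (m.choose j : ℝ) * s ^ j * (1-s) ^ (m-j) := by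
      intro j _
      have := hd0 j
      positivity
    constructor
    · exact mul_nonneg (by positivity) (Finset.sum_nonneg hterm_nonneg)
    · have hsum1 : ∑ j ∈ range (m+1), (m.choose j : ℝ) * s ^ j * (1-s) ^ (m-j) = 1 := by
        calc ∑ j ∈ range (m+1), (m.choose j : ℝ) * s ^ j * (1-s) ^ (m-j)
            = ∑ j ∈ range (m+1), s ^ j * (1-s) ^ (m-j) * (m.choose j : ℝ) := by
              apply Finset.sum_congr rfl; intros; ring
          _ = (s + (1-s)) ^ m := (add_pow s (1-s) m).symm
          _ = 1 := by norm_num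
      have hle : ∑ j ∈ range (m+1), (c (j+1) - c j) * (m.choose j : ℝ) * s ^ j * (1-s) ^ (m-j)
          ≤ ∑ j ∈ range (m+1), (b - a) / ((m:ℝ)+1) * ((m.choose j : ℝ) * s ^ j * (1-s) ^ (m-j)) := by
        apply Finset.sum_le_sum
        intro j _
        have h1 : (c (j+1) - c j) * (m.choose j : ℝ) * s ^ j * (1-s) ^ (m-j)
            = (c (j+1) - c j) * ((m.choose j : ℝ) * s ^ j * (1-s) ^ (m-j)) := by ring
        rw [h1]
        exact mul_le_mul_of_nonneg_right (hd1 j) (by positivity)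
      rw [← Finset.mul_sum, hsum1, mul_one] at hle
      have hm1 : (0:ℝ) < (m:ℝ)+1 := by positivity
      calc ((m:ℝ)+1) * ∑ j ∈ range (m+1), (c (j+1) - c j) * (m.choose j : ℝ) * s ^ j * (1-s) ^ (m-j)
          ≤ ((m:ℝ)+1) * ((b - a) / ((m:ℝ)+1)) := by
            exact mul_le_mul_of_nonneg_left hle (le_of_lt hm1)
        _ = b - a := by field_simp
  -- monotonicity of bern on [a,b]
  have hdiff : Differentiable ℝ (bern relu a b (m+1)) := fun x => (hderiv x).differentiableAt
  have hmono : MonotoneOn (bern relu a b (m+1)) (Icc a b) := by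
    apply monotoneOn_of_deriv_nonneg (convex_Icc a b) hdiff.continuous.continuousOn
      (hdiff.differentiableOn)
    intro x hx
    rw [interior_Icc] at hx
    rw [(hderiv x).deriv]
    have := (hDbound x ⟨le_of_lt hx.1, le_of_lt hx.2⟩).1
    positivity
  -- antitonicity of bern - id on [a,b]
  have hanti : AntitoneOn (fun x => bern relu a b (m+1) x - x) (Icc a b) := by
    have hdiff2 : Differentiable ℝ (fun x => bern relu a b (m+1) x - x) :=
      fun x => ((hderiv x).sub (hasDerivAt_id' (x:=x))).differentiableAt
    apply antitoneOn_of_deriv_nonpos (convex_Icc a b) hdiff2.continuous.continuousOn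
      hdiff2.differentiableOn
    intro x hx
    rw [interior_Icc] at hx
    rw [((hderiv x).fun_sub (hasDerivAt_id' (x:=x))).deriv]
    have h2 := (hDbound x ⟨le_of_lt hx.1, le_of_lt hx.2⟩).2
    have h3 : (((m:ℝ)+1) * ∑ j ∈ range (m+1), (c (j+1) - c j) * (m.choose j : ℝ) *
        ((x-a)/(b-a)) ^ j * (1-(x-a)/(b-a)) ^ (m-j)) * (b-a)⁻¹ ≤ (b-a) * (b-a)⁻¹ :=
      mul_le_mul_of_nonneg_right h2 (by positivity)
    rw [mul_inv_cancel₀ hba'] at h3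
    linarith
  have hrelu_zero : ∀ x : ℝ, x ≤ 0 → relu x = 0 := fun x h => max_eq_right h
  have hrelu_id : ∀ x : ℝ, 0 ≤ x → relu x = x := fun x h => max_eq_left h
  have part1 : MonotoneOn (fun x => bern relu a b (m+1) x - relu x) (Icc a 0) := by
    intro x hx y hy hxy
    simp only
    rw [hrelu_zero x hx.2, hrelu_zero y hy.2, sub_zero, sub_zero]
    exact hmono ⟨hx.1, le_trans hx.2 (le_of_lt hb)⟩ ⟨hy.1, le_trans hy.2 (le_of_lt hb)⟩ hxy
  have part2 : AntitoneOn (fun x => bern relu a b (m+1) x - relu x) (Icc 0 b) := by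
    intro x hx y hy hxy
    simp only
    rw [hrelu_id x hx.1, hrelu_id y hy.1]
    exact hanti ⟨le_trans (le_of_lt ha) hx.1, hx.2⟩ ⟨le_trans (le_of_lt ha) hy.1, hy.2⟩ hxy
  refine ⟨part1, part2, ?_⟩
  intro x hx
  have h0 : bern relu a b (m+1) 0 - relu 0 = bern relu a b (m+1) 0 := by
    rw [hrelu_zero 0 le_rfl, sub_zero]
  rcases le_total x 0 with h | h
  · have := part1 ⟨hx.1, h⟩ ⟨le_of_lt ha, le_rfl⟩ h
    simpa [h0] using this
  · have := part2 ⟨le_rfl, le_of_lt hb⟩ ⟨h, hx.2⟩ h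
    simpa [h0] using this
end

section
/- Let p be the order k ≥ 1 Bernstein polynomial of ReLU on [a,b] with a < 0 < b, and let ε = p(0). Then for all x in [a,b], (p(x) − ε/2) − ε/2 ≤ ReLU(x) ≤ (p(x) − ε/2) + ε/2; i.e., the Taylor model (p − ε/2, [−ε/2, ε/2]) over-approximates ReLU on [a,b]. -/
open Set

lemma sum_bern_one (k : ℕ) (t : ℝ) :
    ∑ i ∈ Finset.range (k+1), (k.choose i : ℝ) * t ^ i * (1 - t) ^ (k - i) = 1 := by
  have h : ∑ i ∈ Finset.range (k+1), (k.choose i : ℝ) * t ^ i * (1 - t) ^ (k - i)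
      = (t + (1-t))^k := by
    rw [add_pow]; exact Finset.sum_congr rfl fun i _ => by ring
  simpa using h

lemma sum_bern_id (n : ℕ) (t : ℝ) :
    ∑ i ∈ Finset.range (n+2), (i : ℝ) * ((n+1).choose i : ℝ) * t ^ i * (1 - t) ^ (n+1 - i)
      = (n+1) * t := by
  rw [Finset.sum_range_succ']
  simp only [Nat.cast_zero, zero_mul, add_zero]
  have key : ∀ j, ((j+1 : ℕ) : ℝ) * ((n+1).choose (j+1) : ℝ) = ((n+1) : ℝ) * (n.choose j : ℝ) := by
    intro j
    have h2 : (n+1) * (n.choose j) = ((n+1).choose (j+1)) * (j+1) := Nat.add_one_mul_choose_eq n j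
    have := congrArg (fun m : ℕ => (m : ℝ)) h2
    push_cast at this ⊢
    linarith [this]
  calc ∑ j ∈ Finset.range (n+1), ((j+1:ℕ):ℝ) * ((n+1).choose (j+1) : ℝ) * t ^ (j+1) * (1-t) ^ (n+1 - (j+1))
      = ((n+1):ℝ) * t * ∑ j ∈ Finset.range (n+1), (n.choose j : ℝ) * t ^ j * (1-t) ^ (n - j) := by
        rw [Finset.mul_sum]
        refine Finset.sum_congr rfl (fun j hj => ?_)
        rw [key j]
        have : n + 1 - (j+1) = n - j := by omega
        rw [this]; ring
    _ = ((n+1):ℝ) * t := by rw [sum_bern_one n t]; ring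

lemma coeffA (n j : ℕ) : ((j+1 : ℕ) : ℝ) * ((n+1).choose (j+1) : ℝ)
    = ((n+1) : ℝ) * (n.choose j : ℝ) := by
  have h2 : (n+1) * (n.choose j) = ((n+1).choose (j+1)) * (j+1) := Nat.add_one_mul_choose_eq n j
  have := congrArg (fun m : ℕ => (m : ℝ)) h2
  push_cast at this ⊢
  linarith [this]

lemma coeffB (n i : ℕ) (hi : i ≤ n) : (((n+1) - i : ℕ) : ℝ) * ((n+1).choose i : ℝ)
    = ((n+1) : ℝ) * (n.choose i : ℝ) := by
  have h1 : (n+1).choose (i+1) * (i+1) = (n+1).choose i * ((n+1) - i) :=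
    Nat.choose_succ_right_eq (n+1) i
  have h2 : (n+1) * (n.choose i) = ((n+1).choose (i+1)) * (i+1) := Nat.add_one_mul_choose_eq n i
  have h3 : (n+1).choose i * ((n+1) - i) = (n+1) * n.choose i := by omega
  have := congrArg (fun m : ℕ => (m : ℝ)) h3
  push_cast at this ⊢
  linarith [this]

lemma bern_deriv (f : ℕ → ℝ) (n : ℕ) (t : ℝ) :
    HasDerivAt
      (fun s => ∑ i ∈ Finset.range (n+2), f i * ((n+1).choose i : ℝ) * s^i * (1-s)^(n+1-i))
      (∑ i ∈ Finset.range (n+1),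
        (f (i+1) - f i) * (((n+1) : ℝ) * (n.choose i : ℝ)) * t^i * (1-t)^(n-i)) t := by
  have h1 : HasDerivAt (fun s : ℝ => 1 - s) (-1) t := by
    simpa using (hasDerivAt_id t).const_sub 1
  have term : ∀ i, HasDerivAt
      (fun s : ℝ => f i * ((n+1).choose i : ℝ) * s^i * (1-s)^(n+1-i))
      ((f i * ((n+1).choose i : ℝ) * (i : ℝ)) * t^(i-1) * (1-t)^(n+1-i)
        - (f i * ((n+1).choose i : ℝ) * (((n+1)-i : ℕ) : ℝ)) * t^i * (1-t)^(n-i)) t := by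
    intro i
    have hp : HasDerivAt (fun s : ℝ => (1-s)^(n+1-i))
        ((((n+1)-i : ℕ) : ℝ) * (1-t)^((n+1)-i-1) * (-1)) t :=
      (hasDerivAt_pow ((n+1)-i) (1-t)).comp t h1
    have h := ((hasDerivAt_pow i t).mul hp).const_mul (f i * ((n+1).choose i : ℝ))
    have e : (fun s : ℝ => f i * ((n+1).choose i : ℝ) * s^i * (1-s)^(n+1-i)) = (fun y => f i * ((n+1).choose i : ℝ) * ((fun x : ℝ => x ^ i) * fun s : ℝ => (1 - s) ^ (n + 1 - i)) y) := by
      ext s; simp only [Pi.mul_apply]; ring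
    rw [e]; refine h.congr_deriv (Eq.symm ?_)
    · rcases Nat.lt_or_ge i (n+2) with hlt | hge
      · have e1 : (n+1) - i - 1 = n - i := by omega
        rw [e1]; ring
      · have e1 : (n+1) - i = 0 := by omega
        have e2 : n - i = 0 := by omega
        rw [e1, e2]; ring
  have hsum := HasDerivAt.fun_sum (fun i (_ : i ∈ Finset.range (n+2)) => term i)
  refine hsum.congr_deriv (Eq.symm ?_)
  have hA : ∑ i ∈ Finset.range (n+2),
        f i * ((n+1).choose i : ℝ) * (i : ℝ) * t^(i-1) * (1-t)^(n+1-i)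
      = ∑ i ∈ Finset.range (n+1),
        f (i+1) * ((n+1).choose (i+1) : ℝ) * ((i+1 : ℕ) : ℝ) * t^i * (1-t)^(n+1-(i+1)) := by
    rw [Finset.sum_range_succ']
    simp
  have hB : ∑ i ∈ Finset.range (n+2),
        f i * ((n+1).choose i : ℝ) * (((n+1)-i : ℕ) : ℝ) * t^i * (1-t)^(n-i)
      = ∑ i ∈ Finset.range (n+1),
        f i * ((n+1).choose i : ℝ) * (((n+1)-i : ℕ) : ℝ) * t^i * (1-t)^(n-i) := by
    rw [Finset.sum_range_succ]
    simp
  rw [Finset.sum_sub_distrib, hA, hB, ← Finset.sum_sub_distrib]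
  refine Finset.sum_congr rfl (fun i hi => ?_)
  have hi' : i ≤ n := by simpa [Nat.lt_succ_iff] using hi
  have e1 : (n+1) - (i+1) = n - i := by omega
  rw [e1]
  have hA := coeffA n i
  have hB := coeffB n i hi'
  linear_combination (t^i * (1-t)^(n-i) * f i) * hB - (t^i * (1-t)^(n-i) * f (i+1)) * hA

lemma q_bounds (f : ℕ → ℝ) (n : ℕ) (L : ℝ)
    (hstep : ∀ i ≤ n, 0 ≤ f (i+1) - f i ∧ f (i+1) - f i ≤ L)
    (s u : ℝ) (hs : 0 ≤ s) (hsu : s ≤ u) (hu : u ≤ 1) :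
    0 ≤ (∑ i ∈ Finset.range (n+2), f i * ((n+1).choose i : ℝ) * u^i * (1-u)^(n+1-i))
        - (∑ i ∈ Finset.range (n+2), f i * ((n+1).choose i : ℝ) * s^i * (1-s)^(n+1-i)) ∧
    (∑ i ∈ Finset.range (n+2), f i * ((n+1).choose i : ℝ) * u^i * (1-u)^(n+1-i))
        - (∑ i ∈ Finset.range (n+2), f i * ((n+1).choose i : ℝ) * s^i * (1-s)^(n+1-i))
      ≤ ((n:ℝ)+1) * L * (u - s) := by
  set Q : ℝ → ℝ := fun t =>
    ∑ i ∈ Finset.range (n+2), f i * ((n+1).choose i : ℝ) * t^i * (1-t)^(n+1-i) with hQ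
  set G : ℝ → ℝ := fun t =>
    ∑ i ∈ Finset.range (n+1),
      (f (i+1) - f i) * (((n+1) : ℝ) * (n.choose i : ℝ)) * t^i * (1-t)^(n-i) with hG
  have hGbound : ∀ c : ℝ, 0 ≤ c → c ≤ 1 → 0 ≤ G c ∧ G c ≤ ((n:ℝ)+1) * L := by
    intro c hc0 hc1
    have hc1' : (0:ℝ) ≤ 1 - c := by linarith
    constructor
    · apply Finset.sum_nonneg
      intro i hi
      have hi' : i ≤ n := by simpa [Nat.lt_succ_iff] using hi
      have h0 := (hstep i hi').1
      have hco : (0:ℝ) ≤ ((n:ℝ)+1) * (n.choose i : ℝ) := by positivity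
      exact mul_nonneg (mul_nonneg (mul_nonneg h0 hco) (pow_nonneg hc0 _)) (pow_nonneg hc1' _)
    · have h1 : G c ≤ ∑ i ∈ Finset.range (n+1),
          L * (((n:ℝ)+1) * ((n.choose i : ℝ) * c^i * (1-c)^(n-i))) := by
        apply Finset.sum_le_sum
        intro i hi
        have hi' : i ≤ n := by simpa [Nat.lt_succ_iff] using hi
        obtain ⟨hl, hr⟩ := hstep i hi'
        have hnn : (0:ℝ) ≤ (((n:ℝ)+1) * (n.choose i : ℝ)) * (c^i * (1-c)^(n-i)) := by
          have : (0:ℝ) ≤ ((n:ℝ)+1) * (n.choose i : ℝ) := by positivity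
          exact mul_nonneg this (mul_nonneg (pow_nonneg hc0 _) (pow_nonneg hc1' _))
        nlinarith [mul_le_mul_of_nonneg_right hr hnn]
      rw [← Finset.mul_sum, ← Finset.mul_sum, sum_bern_one n c] at h1
      calc G c ≤ L * (((n:ℝ)+1) * 1) := h1
        _ = ((n:ℝ)+1) * L := by ring
  rcases eq_or_lt_of_le hsu with rfl | hlt
  · simp
  · have hderiv : ∀ c : ℝ, HasDerivAt Q (G c) c := fun c => bern_deriv f n c
    obtain ⟨c, hc, hceq⟩ := exists_hasDerivAt_eq_slope Q G hlt
      (fun x _ => (hderiv x).continuousAt.continuousWithinAt)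
      (fun x _ => hderiv x)
    have hc0 : 0 ≤ c := le_of_lt (lt_of_le_of_lt hs hc.1)
    have hc1 : c ≤ 1 := le_of_lt (lt_of_lt_of_le hc.2 hu)
    obtain ⟨hg0, hg1⟩ := hGbound c hc0 hc1
    have hus : 0 < u - s := by linarith
    have key : Q u - Q s = G c * (u - s) := by
      field_simp at hceq
      linarith [hceq]
    constructor
    · rw [key]; positivity
    · rw [key]; nlinarith

lemma relu_sub_le {u v : ℝ} (h : v ≤ u) : relu u - relu v ≤ u - v := by
  unfold relu
  rcases le_total u 0 with h1 | h1 <;> rcases le_total v 0 with h2 | h2 <;>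
    simp [max_eq_right, max_eq_left, *] <;> linarith

lemma relu_mono : Monotone relu := fun u v h => max_le_max h le_rfl

theorem bernstein_relu_taylor_model (a b : ℝ) (k : ℕ)
    (ha : a < 0) (hb : 0 < b) (hk : 1 ≤ k) :
    ∀ x ∈ Icc a b,
      (bern relu a b k x - bern relu a b k 0 / 2) - bern relu a b k 0 / 2 ≤ relu x ∧
      relu x ≤ (bern relu a b k x - bern relu a b k 0 / 2) + bern relu a b k 0 / 2 := by
  obtain ⟨n, rfl⟩ : ∃ n, k = n + 1 := ⟨k - 1, by omega⟩
  have hd : (0:ℝ) < b - a := by linarith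
  have hn1 : (0:ℝ) < (n:ℝ) + 1 := by positivity
  set F : ℕ → ℝ := fun i => relu (a + ((i:ℝ) / ((n:ℝ)+1)) * (b-a)) with hF
  set Q : ℝ → ℝ := fun t =>
    ∑ i ∈ Finset.range (n+2), F i * ((n+1).choose i : ℝ) * t^i * (1-t)^(n+1-i) with hQ
  have hbern : ∀ x : ℝ, bern relu a b (n+1) x = Q ((x-a)/(b-a)) := by
    intro x
    unfold bern
    simp only [hQ, hF]
    refine Finset.sum_congr rfl (fun i hi => ?_)
    have h1 : (b - x)/(b-a) = 1 - (x-a)/(b-a) := by field_simp; ring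
    rw [h1]
    push_cast
    ring_nf
  have hstep : ∀ i ≤ n, 0 ≤ F (i+1) - F i ∧ F (i+1) - F i ≤ (b-a)/((n:ℝ)+1) := by
    intro i _
    obtain ⟨u, hu⟩ : ∃ u : ℝ, u = a + (((i:ℝ)+1) / ((n:ℝ)+1)) * (b-a) := ⟨_, rfl⟩
    obtain ⟨v, hv⟩ : ∃ v : ℝ, v = a + ((i:ℝ) / ((n:ℝ)+1)) * (b-a) := ⟨_, rfl⟩
    have huv : u - v = (b-a)/((n:ℝ)+1) := by
      rw [hu, hv]; field_simp; ring
    have hstep_pos : (0:ℝ) < (b-a)/((n:ℝ)+1) := by positivity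
    have hvu : v ≤ u := by linarith
    have e1 : F (i+1) = relu u := by
      simp only [hF, hu]; congr 1; push_cast; ring
    have e2 : F i = relu v := by rw [hF, hv]
    constructor
    · rw [e1, e2]; have := relu_mono hvu; linarith
    · rw [e1, e2]; have := relu_sub_le hvu; linarith
  have hQnonneg : ∀ t : ℝ, 0 ≤ t → t ≤ 1 → 0 ≤ Q t := by
    intro t h0 h1
    apply Finset.sum_nonneg
    intro i _
    have hFnn : 0 ≤ F i := le_max_right _ _
    have h1' : (0:ℝ) ≤ 1 - t := by linarith
    exact mul_nonneg (mul_nonneg (mul_nonneg hFnn (by positivity)) (pow_nonneg h0 _))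
      (pow_nonneg h1' _)
  have hQlin : ∀ t : ℝ, 0 ≤ t → t ≤ 1 → a + (b-a) * t ≤ Q t := by
    intro t h0 h1
    have h1' : (0:ℝ) ≤ 1 - t := by linarith
    have hid := sum_bern_id n t
    have hone := sum_bern_one (n+1) t
    have hnodes : ∑ i ∈ Finset.range (n+2),
        (a + ((i:ℝ) / ((n:ℝ)+1)) * (b-a)) * ((n+1).choose i : ℝ) * t^i * (1-t)^(n+1-i)
        = a + (b-a) * t := by
      have expand : ∀ i ∈ Finset.range (n+2),
          (a + ((i:ℝ) / ((n:ℝ)+1)) * (b-a)) * ((n+1).choose i : ℝ) * t^i * (1-t)^(n+1-i)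
          = a * (((n+1).choose i : ℝ) * t^i * (1-t)^(n+1-i))
            + ((b-a)/((n:ℝ)+1)) * ((i:ℝ) * ((n+1).choose i : ℝ) * t^i * (1-t)^(n+1-i)) := by
        intro i _
        field_simp
      rw [Finset.sum_congr rfl expand, Finset.sum_add_distrib, ← Finset.mul_sum, ← Finset.mul_sum,
        hone, hid]
      field_simp
    rw [← hnodes]
    apply Finset.sum_le_sum
    intro i _
    have hle : (a + ((i:ℝ) / ((n:ℝ)+1)) * (b-a)) ≤ F i := le_max_left _ _
    have hnn : (0:ℝ) ≤ ((n+1).choose i : ℝ) * t^i * (1-t)^(n+1-i) := by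
      exact mul_nonneg (mul_nonneg (by positivity) (pow_nonneg h0 _)) (pow_nonneg h1' _)
    nlinarith
  intro x hx
  obtain ⟨hax, hxb⟩ := hx
  set t0 : ℝ := (0 - a)/(b-a) with ht0
  set tx : ℝ := (x - a)/(b-a) with htx
  have htx0 : 0 ≤ tx := by rw [htx]; apply div_nonneg <;> linarith
  have htx1 : tx ≤ 1 := by rw [htx, div_le_one hd]; linarith
  have ht00 : 0 ≤ t0 := by rw [ht0]; apply div_nonneg <;> linarith
  have ht01 : t0 ≤ 1 := by rw [ht0, div_le_one hd]; linarith
  have hεeq : bern relu a b (n+1) 0 = Q t0 := hbern 0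
  have hxeq : bern relu a b (n+1) x = Q tx := hbern x
  rcases le_total x 0 with hx0 | hx0
  · have hrelu : relu x = 0 := max_eq_right hx0
    have hts : tx ≤ t0 := by rw [htx, ht0]; gcongr <;> linarith
    obtain ⟨hge, _⟩ := q_bounds F n ((b-a)/((n:ℝ)+1)) hstep tx t0 htx0 hts ht01
    have hge' : 0 ≤ Q t0 - Q tx := hge
    have hQx := hQnonneg tx htx0 htx1
    rw [hεeq, hxeq, hrelu]
    constructor <;> linarith
  · have hrelu : relu x = x := max_eq_left hx0
    have hts : t0 ≤ tx := by rw [htx, ht0]; gcongr <;> linarith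
    obtain ⟨_, hle⟩ := q_bounds F n ((b-a)/((n:ℝ)+1)) hstep t0 tx ht00 hts htx1
    have hle' : Q tx - Q t0 ≤ ((n:ℝ)+1) * ((b-a)/((n:ℝ)+1)) * (tx - t0) := hle
    have hxval : ((n:ℝ)+1) * ((b-a)/((n:ℝ)+1)) * (tx - t0) = x := by
      rw [htx, ht0]
      field_simp
      ring
    have hlin := hQlin tx htx0 htx1
    have haxx : a + (b-a) * tx = x := by
      rw [htx]
      field_simp
      ring
    rw [hεeq, hxeq, hrelu]
    constructor <;> linarith
end

section
/- If p is the order k ≥ 1 Bernstein polynomial of ReLU on [a,b] with a < 0 < b, then the derivative of p at a is nonnegative and the derivative of p at b is at most 1. -/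
open Set

lemma hasDerivAt_bern (f : ℝ → ℝ) (a b : ℝ) (k : ℕ) (x : ℝ) :
    HasDerivAt (bern f a b k)
      (∑ i ∈ Finset.range (k + 1),
        f (a + (i / k : ℝ) * (b - a)) * (k.choose i : ℝ) *
          ((i : ℝ) * ((x - a) / (b - a)) ^ (i - 1) * (1 / (b - a)) * ((b - x) / (b - a)) ^ (k - i)
            + ((x - a) / (b - a)) ^ i *
              (((k - i : ℕ) : ℝ) * ((b - x) / (b - a)) ^ (k - i - 1) * (-1 / (b - a))))) x := by
  unfold bern
  apply HasDerivAt.fun_sum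
  intro i _
  have hu : HasDerivAt (fun x : ℝ => (x - a) / (b - a)) (1 / (b - a)) x := by
    simpa using ((hasDerivAt_id x).sub_const a).div_const (b - a)
  have hv : HasDerivAt (fun x : ℝ => (b - x) / (b - a)) (-1 / (b - a)) x := by
    have := ((hasDerivAt_const x b).sub (hasDerivAt_id x)).div_const (b - a)
    simpa [neg_div] using this
  have h := (((hu.fun_pow i).const_mul (f (a + (i / k : ℝ) * (b - a)) * (k.choose i : ℝ))).fun_mul
    (hv.fun_pow (k - i)))
  convert h using 1
  · rfl
  ring

theorem bernstein_relu_deriv_endpoints (a b : ℝ) (k : ℕ)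
    (ha : a < 0) (hb : 0 < b) (hk : 1 ≤ k) :
    0 ≤ deriv (bern relu a b k) a ∧ deriv (bern relu a b k) b ≤ 1 := by
  have hba : (0:ℝ) < b - a := by linarith
  have hne : b - a ≠ 0 := ne_of_gt hba
  constructor
  · rw [(hasDerivAt_bern relu a b k a).deriv]
    apply Finset.sum_nonneg
    intro i _
    have h0 : (a - a) / (b - a) = 0 := by simp
    have h1 : (b - a) / (b - a) = 1 := div_self hne
    rw [h0, h1]
    match i with
    | 0 =>
      have hr : relu a = 0 := max_eq_right ha.le
      simp [hr]
    | 1 =>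
      simp only [pow_one, one_pow, Nat.cast_one, pow_zero, zero_mul, add_zero, one_mul,
        mul_one, zero_pow]
      have hc : (0:ℝ) ≤ relu (a + 1 / (k:ℝ) * (b - a)) * ((k.choose 1 : ℕ) : ℝ) :=
        mul_nonneg (le_max_right _ 0) (Nat.cast_nonneg _)
      exact mul_nonneg hc (by positivity)
    | (i+2) =>
      simp [pow_succ]
  · obtain ⟨m, rfl⟩ : ∃ m, k = m + 1 := ⟨k - 1, (Nat.succ_pred_eq_of_pos hk).symm⟩
    rw [(hasDerivAt_bern relu a b (m+1) b).deriv]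
    have h0 : (b - b) / (b - a) = 0 := by simp
    have h1 : (b - a) / (b - a) = 1 := div_self hne
    rw [Finset.sum_range_succ, Finset.sum_range_succ]
    have hz : ∑ i ∈ Finset.range m,
        relu (a + (i / (m+1:ℕ) : ℝ) * (b - a)) * ((m+1).choose i : ℝ) *
          ((i : ℝ) * ((b - a) / (b - a)) ^ (i - 1) * (1 / (b - a)) * ((b - b) / (b - a)) ^ (m+1 - i)
            + ((b - a) / (b - a)) ^ i *
              (((m+1 - i : ℕ) : ℝ) * ((b - b) / (b - a)) ^ (m+1 - i - 1) * (-1 / (b - a)))) = 0 := by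
      apply Finset.sum_eq_zero
      intro i hi
      have hi' : i < m := Finset.mem_range.mp hi
      rw [h0, h1]
      rw [zero_pow (by omega), zero_pow (by omega)]
      ring
    rw [hz, h0, h1]
    simp only [zero_add, one_pow, Nat.add_sub_cancel]
    have e1 : m + 1 - m = 1 := by omega
    have e2 : m + 1 - (m + 1) = 0 := by omega
    rw [e1, e2]
    simp only [pow_one, pow_zero, Nat.choose_self, Nat.choose_succ_self_right,
      Nat.cast_one, Nat.cast_zero, mul_zero, zero_mul, mul_one, one_mul, add_zero, zero_add]
    push_cast
    have hm1 : ((m:ℝ) + 1) ≠ 0 := by positivity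
    have hdd : ((m:ℝ) + 1) / ((m:ℝ) + 1) = 1 := div_self hm1
    rw [hdd]
    have hrb : relu (a + 1 * (b - a)) = b := by
      simp [relu, max_eq_left hb.le]
    rw [hrb]
    set r := relu (a + (m:ℝ) / ((m:ℝ) + 1) * (b - a)) with hrdef
    have hxm : a + (m:ℝ) / ((m:ℝ) + 1) * (b - a) ≤ r := le_max_left _ _
    have key : r * ((m:ℝ) + 1) * (-1 / (b - a)) + b * (((m:ℝ) + 1) * (1 / (b - a)))
        = (((m:ℝ) + 1) * (b - r)) / (b - a) := by ring
    rw [show (0:ℝ) ^ 0 = 1 from pow_zero 0, one_mul] at *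
    rw [key, div_le_one hba]
    have h3 : ((m:ℝ) + 1) * (b - (a + (m:ℝ) / ((m:ℝ) + 1) * (b - a))) = b - a := by
      field_simp
      ring
    have h2 : ((m:ℝ) + 1) * (b - r) ≤ ((m:ℝ) + 1) * (b - (a + (m:ℝ) / ((m:ℝ) + 1) * (b - a))) :=
      mul_le_mul_of_nonneg_left (by linarith) (by positivity)
    linarith
end
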